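/- Assume the scaling function satisfies the decay bound |φ̂(ω)| ≤ C_φ/ω for all ω > 0. Then for every N×N permutation matrix P and every f ∈ ℂ^N, ‖Q_J (P f − f)‖ ≤ C_φ 2^{−J} λ₁^{−1} ‖P f − f‖; consequently ‖Q_J (P f − f)‖ ≤ C_φ 2^{−J} λ₁^{−1} ‖P − I‖ ‖f‖, where ‖P − I‖ is the operator norm. -/

import Mathlib

open scoped BigOperators

noncomputable section

/-- Signals on a graph with `N` vertices. -/
abbrev GV (N : ℕ) := EuclideanSpace ℂ (Fin N)

/-- Entrywise absolute value (modulus) of a signal. -/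
def absVec {N : ℕ} (f : GV N) : GV N := WithLp.toLp 2 (fun n => ((‖f n‖ : ℝ) : ℂ))

/-- The low-pass wavelet operator `Q_J f = ∑ l, φ̂(2^J λ_l) (u_l^* f) u_l`. -/
def Qlow {N : ℕ} (J : ℤ) (phiHat : ℝ → ℂ) (lam : Fin N → ℝ) (u : Fin N → GV N)
    (f : GV N) : GV N :=
  ∑ l, (phiHat ((2:ℝ) ^ J * lam l) * (inner ℂ (u l) f : ℂ)) • u l

/-- The band-pass wavelet operator `Q_j f = ∑ l, ψ̂(2^{-j} λ_l) (u_l^* f) u_l`. -/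
def Qband {N : ℕ} (psiHat : ℝ → ℂ) (lam : Fin N → ℝ) (u : Fin N → GV N) (j : ℤ)
    (f : GV N) : GV N :=
  ∑ l, (psiHat ((2:ℝ) ^ (-j) * lam l) * (inner ℂ (u l) f : ℂ)) • u l

/-- Admissible scales: integers `j > -J`. -/
abbrev Scale (J : ℤ) := {j : ℤ // -J < j}

/-- The scattering propagator `U[p] = U[j_m] ∘ ⋯ ∘ U[j₁]` along a path `p = (j₁, …, j_m)`,
where `U[j] f = |Q_j f|` entrywise; `U[∅] f = f`. -/
def Uprop {N : ℕ} {J : ℤ} (psiHat : ℝ → ℂ) (lam : Fin N → ℝ) (u : Fin N → GV N)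
    (p : List (Scale J)) (f : GV N) : GV N :=
  p.foldl (fun g j => absVec (Qband psiHat lam u j.1 g)) f

/-- The windowed scattering transform `S[p] f = Q_J (U[p] f)`. -/
def Sop {N : ℕ} (J : ℤ) (phiHat psiHat : ℝ → ℂ) (lam : Fin N → ℝ) (u : Fin N → GV N)
    (p : List (Scale J)) (f : GV N) : GV N :=
  Qlow J phiHat lam u (Uprop psiHat lam u p f)

/-- Action of the `N×N` permutation matrix `P` associated with `σ` on a signal:
`(P f)(n) = f(σ⁻¹ n)`. -/
def permVec {N : ℕ} (σ : Equiv.Perm (Fin N)) (f : GV N) : GV N := WithLp.toLp 2 (fun n => f (σ⁻¹ n))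

/-- The permutation matrix `P` of `σ`, as a continuous linear map on `ℂ^N`
(so that `‖·‖` is the operator norm). -/
def permCLM {N : ℕ} (σ : Equiv.Perm (Fin N)) : GV N →L[ℂ] GV N :=
  LinearMap.toContinuousLinearMap
    { toFun := permVec σ
      map_add' := fun _ _ => rfl
      map_smul' := fun _ _ => rfl }

/-- under the decay bound `|φ̂(ω)| ≤ C_φ/ω` for `ω > 0`,
`‖Q_J(Pf - f)‖ ≤ C_φ 2^{-J} λ₁⁻¹ ‖Pf - f‖ ≤ C_φ 2^{-J} λ₁⁻¹ ‖P - I‖ ‖f‖`. -/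
theorem Qlow_perm_difference_bound
    (N : ℕ) (hN : 2 ≤ N)
    (J : ℤ) (phiHat psiHat : ℝ → ℂ)
    (lam : Fin N → ℝ) (u : Fin N → GV N) (α : ℂ)
    -- orthonormal eigenbasis of the graph Laplacian
    (hu : Orthonormal ℂ u)
    -- eigenvalues `0 = λ₀ < λ₁ ≤ ⋯ ≤ λ_{N-1}`
    (hlam0 : lam ⟨0, by omega⟩ = 0)
    (hmono : Monotone lam)
    (hlam1 : 0 < lam ⟨1, by omega⟩)
    -- `u₀ = α (1,…,1)ᵀ/√N` with `|α| = 1`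
    (hα : ‖α‖ = 1)
    (hu0 : ∀ n, u ⟨0, by omega⟩ n = α / (Real.sqrt N : ℂ))
    -- Littlewood–Paley condition
    (hLP : ∀ t : ℝ, 0 ≤ t →
      ‖phiHat ((2:ℝ) ^ J * t)‖ ^ 2
        + ∑' j : Scale J, ‖psiHat ((2:ℝ) ^ (-j.1) * t)‖ ^ 2 = 1)
    (Cphi : ℝ) (hCphi : 0 < Cphi)
    (hdecay : ∀ ω : ℝ, 0 < ω → ‖phiHat ω‖ ≤ Cphi / ω)
    (σ : Equiv.Perm (Fin N)) (f : GV N) :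
    ‖Qlow J phiHat lam u (permVec σ f - f)‖
        ≤ Cphi * (2:ℝ) ^ (-J) * (lam ⟨1, by omega⟩)⁻¹ * ‖permVec σ f - f‖
    ∧ ‖Qlow J phiHat lam u (permVec σ f - f)‖
        ≤ Cphi * (2:ℝ) ^ (-J) * (lam ⟨1, by omega⟩)⁻¹
          * ‖permCLM σ - ContinuousLinearMap.id ℂ (GV N)‖ * ‖f‖ := by

  classical
  set K := Cphi * (2:ℝ) ^ (-J) * (lam ⟨1, by omega⟩)⁻¹ with hKdef
  set g : GV N := permVec σ f - f with hgdef
  have hKpos : 0 < K := by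
    refine mul_pos (mul_pos hCphi ?_) (inv_pos.mpr hlam1)
    exact zpow_pos (by norm_num) _
  -- the mean-zero property of `g`
  have hinner0 : (inner ℂ (u ⟨0, by omega⟩) g : ℂ) = 0 := by
    have hsum : ∑ n, g n = 0 := by
      have h1 : ∑ n, f (σ⁻¹ n) = ∑ n, f n := Equiv.sum_comp σ⁻¹ f
      have : ∑ n, g n = (∑ n, f (σ⁻¹ n)) - ∑ n, f n := by
        rw [← Finset.sum_sub_distrib]
        exact Finset.sum_congr rfl fun n _ => by rw [hgdef, PiLp.sub_apply]; rfl
      rw [this, h1, sub_self]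
    rw [PiLp.inner_apply]
    simp only [RCLike.inner_apply, hu0]
    rw [← Finset.sum_mul, hsum, zero_mul]
  -- the key estimate
  have key : ‖Qlow J phiHat lam u g‖ ≤ K * ‖g‖ := by
    have hsq : ‖Qlow J phiHat lam u g‖ ^ 2 ≤ (K * ‖g‖) ^ 2 := by
      have hexp : ‖Qlow J phiHat lam u g‖ ^ 2
          = ∑ l, ‖phiHat ((2:ℝ) ^ J * lam l) * (inner ℂ (u l) g : ℂ)‖ ^ 2 := by
        rw [Qlow, @norm_sq_eq_re_inner ℂ, hu.inner_sum _ _ Finset.univ, map_sum]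
        refine Finset.sum_congr rfl fun l _ => ?_
        rw [RCLike.conj_mul]
        norm_cast
      rw [hexp, mul_pow]
      have hterm : ∀ l ∈ Finset.univ, ‖phiHat ((2:ℝ) ^ J * lam l) * (inner ℂ (u l) g : ℂ)‖ ^ 2
          ≤ K ^ 2 * ‖(inner ℂ (u l) g : ℂ)‖ ^ 2 := by
        intro l _
        by_cases hl : l = ⟨0, by omega⟩
        · rw [hl, hinner0, mul_zero]
          simp
        · have h1le : (⟨1, by omega⟩ : Fin N) ≤ l := by
            rw [Fin.le_def]
            have : (l : ℕ) ≠ 0 := fun h => hl (Fin.ext h)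
            exact Nat.one_le_iff_ne_zero.mpr this
          have hll : 0 < lam l := lt_of_lt_of_le hlam1 (hmono h1le)
          have hω : 0 < (2:ℝ) ^ J * lam l := mul_pos (zpow_pos (by norm_num) _) hll
          have hb : ‖(phiHat ((2:ℝ) ^ J * lam l))‖ ≤ K := by
            refine (hdecay _ hω).trans ?_
            rw [hKdef, div_eq_mul_inv, mul_inv, ← zpow_neg, ← mul_assoc]
            have hinv : (lam l)⁻¹ ≤ (lam ⟨1, by omega⟩)⁻¹ :=
              inv_anti₀ hlam1 (hmono h1le)
            have : 0 ≤ Cphi * (2:ℝ) ^ (-J) :=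
              le_of_lt (mul_pos hCphi (zpow_pos (by norm_num) _))
            exact mul_le_mul_of_nonneg_left hinv this
          rw [norm_mul, ← mul_pow]
          refine pow_le_pow_left₀ (by positivity) ?_ 2
          refine mul_le_mul_of_nonneg_right ?_ (norm_nonneg _)
          simpa using hb
      calc ∑ l, ‖phiHat ((2:ℝ) ^ J * lam l) * (inner ℂ (u l) g : ℂ)‖ ^ 2
          ≤ ∑ l, K ^ 2 * ‖(inner ℂ (u l) g : ℂ)‖ ^ 2 := Finset.sum_le_sum hterm
        _ = K ^ 2 * ∑ l, ‖(inner ℂ (u l) g : ℂ)‖ ^ 2 := by rw [Finset.mul_sum]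
        _ ≤ K ^ 2 * ‖g‖ ^ 2 := by
            refine mul_le_mul_of_nonneg_left ?_ (by positivity)
            exact hu.sum_inner_products_le g
    have := Real.sqrt_le_sqrt hsq
    rwa [Real.sqrt_sq (norm_nonneg _), Real.sqrt_sq (by positivity)] at this
  -- operator-norm bound on `g`
  have hgle : ‖g‖ ≤ ‖permCLM σ - ContinuousLinearMap.id ℂ (GV N)‖ * ‖f‖ := by
    have hg2 : g = (permCLM σ - ContinuousLinearMap.id ℂ (GV N)) f := by rw [hgdef, ContinuousLinearMap.sub_apply]; rfl
    rw [hg2]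
    exact ContinuousLinearMap.le_opNorm _ f
  refine ⟨key, key.trans ?_⟩
  calc K * ‖g‖ ≤ K * (‖permCLM σ - ContinuousLinearMap.id ℂ (GV N)‖ * ‖f‖) :=
        mul_le_mul_of_nonneg_left hgle (le_of_lt hKpos)
    _ = K * ‖permCLM σ - ContinuousLinearMap.id ℂ (GV N)‖ * ‖f‖ := by ring


end
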